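/- For every integer k ≥ 2, the Gallai-Ramsey number gr_k(K_3 : C_4) equals k + 4: every k-edge-coloring of K_{k+4} contains a rainbow triangle or a monochromatic C_4, and there exists a k-edge-coloring of K_{k+3} containing neither. -/

import Mathlib

def RainbowTri {V : Type} {k : ℕ} (Adj : V → V → Prop) (c : V → V → Fin k) : Prop :=
  ∃ a b d : V, Adj a b ∧ Adj a d ∧ Adj b d ∧
    c a b ≠ c a d ∧ c a b ≠ c b d ∧ c a d ≠ c b d

def MonoTri {V : Type} {k : ℕ} (Adj : V → V → Prop) (c : V → V → Fin k) : Prop :=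
  ∃ a b d : V, a ≠ b ∧ a ≠ d ∧ b ≠ d ∧ Adj a b ∧ Adj a d ∧ Adj b d ∧
    c a b = c a d ∧ c a d = c b d

def MonoP4 {V : Type} {k : ℕ} (Adj : V → V → Prop) (c : V → V → Fin k) : Prop :=
  ∃ a b d e : V, a ≠ b ∧ a ≠ d ∧ a ≠ e ∧ b ≠ d ∧ b ≠ e ∧ d ≠ e ∧
    Adj a b ∧ Adj b d ∧ Adj d e ∧ c a b = c b d ∧ c b d = c d e

def MonoC4 {V : Type} {k : ℕ} (Adj : V → V → Prop) (c : V → V → Fin k) : Prop :=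
  ∃ a b d e : V, a ≠ b ∧ a ≠ d ∧ a ≠ e ∧ b ≠ d ∧ b ≠ e ∧ d ≠ e ∧
    Adj a b ∧ Adj b d ∧ Adj d e ∧ Adj e a ∧
    c a b = c b d ∧ c b d = c d e ∧ c d e = c e a

def MonoClique {V : Type} {k : ℕ} [DecidableEq V] (Adj : V → V → Prop)
    (c : V → V → Fin k) (p : ℕ) (i : Fin k) : Prop :=
  ∃ S : Finset V, S.card = p ∧ ∀ a ∈ S, ∀ b ∈ S, a ≠ b → Adj a b ∧ c a b = i

def MonoStar {V : Type} {k : ℕ} [DecidableEq V] (Adj : V → V → Prop)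
    (c : V → V → Fin k) (m : ℕ) (i : Fin k) : Prop :=
  ∃ v : V, ∃ S : Finset V, S.card = m ∧ v ∉ S ∧ ∀ u ∈ S, Adj v u ∧ c v u = i

def Full {V : Type} : V → V → Prop := fun a b => a ≠ b

def OAdj {m : ℕ} (A : Finset (Fin m)) : Option (Fin m) → Option (Fin m) → Prop
  | some i, some j => i ≠ j
  | some i, none   => i ∈ A
  | none,   some j => j ∈ A
  | none,   none   => False

def IsGallaiPartition {n k q : ℕ} (c : Fin n → Fin n → Fin k)
    (P : Fin q → Finset (Fin n)) : Prop :=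
  2 ≤ q ∧ (∀ i, (P i).Nonempty) ∧ (∀ i j, i ≠ j → Disjoint (P i) (P j)) ∧
  (∀ x : Fin n, ∃ i, x ∈ P i) ∧
  (∀ i j, i ≠ j → ∃ col : Fin k, ∀ a ∈ P i, ∀ b ∈ P j, c a b = col) ∧
  (∃ c1 c2 : Fin k, ∀ i j, i ≠ j → ∀ a ∈ P i, ∀ b ∈ P j, c a b = c1 ∨ c a b = c2)

def MonoCopy {W V : Type} {k : ℕ} (H : SimpleGraph W) (Adj : V → V → Prop)
    (c : V → V → Fin k) (i : Fin k) : Prop :=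
  ∃ φ : W → V, Function.Injective φ ∧
    ∀ a b, H.Adj a b → Adj (φ a) (φ b) ∧ c (φ a) (φ b) = i

def MonoMergeCopy {W V : Type} {k : ℕ} (H : SimpleGraph W)
    (c : V → V → Fin k) (i : Fin k) : Prop :=
  ∃ φ : W → V, ∀ a b, H.Adj a b → φ a ≠ φ b ∧ c (φ a) (φ b) = i

set_option linter.unusedSectionVars false

lemma two_eq {V : Type} {k : ℕ} (c : V → V → Fin k) (hnr : ¬ RainbowTri Full c) :
    ∀ a b d : V, a ≠ b → a ≠ d → b ≠ d →
      c a b = c a d ∨ c a b = c b d ∨ c a d = c b d := by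
  intro a b d hab had hbd
  by_contra h
  push_neg at h
  exact hnr ⟨a, b, d, hab, had, hbd, h.1, h.2.1, h.2.2⟩

section Helpers
variable {V : Type} [DecidableEq V] {k : ℕ}

lemma mk4 (c : V → V → Fin k) (γ : Fin k) (a b d e : V)
    (hab : a ≠ b) (had : a ≠ d) (hae : a ≠ e) (hbd : b ≠ d) (hbe : b ≠ e) (hde : d ≠ e)
    (h1 : c a b = γ) (h2 : c b d = γ) (h3 : c d e = γ) (h4 : c e a = γ) :
    MonoC4 Full c :=
  ⟨a, b, d, e, hab, had, hae, hbd, hbe, hde, hab, hbd, hde, fun h => hae h.symm,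
    by rw [h1, h2], by rw [h2, h3], by rw [h3, h4]⟩

lemma ex2 (S : Finset V) (h : 2 ≤ S.card) : ∃ a ∈ S, ∃ b ∈ S, a ≠ b :=
  Finset.one_lt_card.mp h

lemma ex3 (S : Finset V) (h : 3 ≤ S.card) :
    ∃ a b d, a ∈ S ∧ b ∈ S ∧ d ∈ S ∧ a ≠ b ∧ a ≠ d ∧ b ≠ d := by
  obtain ⟨T, hTS, hT3⟩ := Finset.exists_subset_card_eq h
  obtain ⟨a, b, d, hab, had, hbd, rfl⟩ := Finset.card_eq_three.mp hT3
  exact ⟨a, b, d, hTS (by simp), hTS (by simp), hTS (by simp), hab, had, hbd⟩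

lemma ex4 (S : Finset V) (h : 4 ≤ S.card) :
    ∃ a b d e, a ∈ S ∧ b ∈ S ∧ d ∈ S ∧ e ∈ S ∧
      a ≠ b ∧ a ≠ d ∧ a ≠ e ∧ b ≠ d ∧ b ≠ e ∧ d ≠ e := by
  obtain ⟨a, ha⟩ := Finset.card_pos.mp (by omega : 0 < S.card)
  have h3 : 3 ≤ (S.erase a).card := by
    rw [Finset.card_erase_of_mem ha]; omega
  obtain ⟨b, d, e, hb, hd, he, hbd, hbe, hde⟩ := ex3 _ h3
  exact ⟨a, b, d, e, ha, S.erase_subset a hb, S.erase_subset a hd, S.erase_subset a he,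
    (Finset.ne_of_mem_erase hb).symm, (Finset.ne_of_mem_erase hd).symm,
    (Finset.ne_of_mem_erase he).symm, hbd, hbe, hde⟩

variable (c : V → V → Fin k)

lemma shareC4 (hs : ∀ a b, c a b = c b a) (Y : Fin k) (x y wi wj : V)
    (hxy : x ≠ y) (hij : wi ≠ wj) (hix : wi ≠ x) (hiy : wi ≠ y) (hjx : wj ≠ x) (hjy : wj ≠ y)
    (e1 : c wi x = Y) (e2 : c wi y = Y) (e3 : c wj x = Y) (e4 : c wj y = Y) :
    MonoC4 Full c :=
  mk4 c Y wi x wj y hix hij hiy (fun h => hjx h.symm) hxy hjy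
    e1 ((hs x wj).trans e3) e4 ((hs y wi).trans e2)

lemma triC4 (hs : ∀ a b, c a b = c b a) (X : Fin k) (a b d w : V)
    (hab : a ≠ b) (had : a ≠ d) (hbd : b ≠ d) (hwa : w ≠ a) (hwb : w ≠ b) (hwd : w ≠ d)
    (t2 : c a d = X) (t3 : c b d = X)
    (hw1 : c w a = X) (hw2 : c w b = X) :
    MonoC4 Full c :=
  mk4 c X w a d b hwa hwd hwb had hab (fun h => hbd h.symm)
    hw1 t2 ((hs d b).trans t3) ((hs b w).trans hw2)

lemma stepw (hs : ∀ a b, c a b = c b a) (X Y : Fin k) (a b d w : V)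
    (hab : a ≠ b) (had : a ≠ d) (hbd : b ≠ d) (hwa : w ≠ a) (hwb : w ≠ b) (hwd : w ≠ d)
    (t1 : c a b = X) (t2 : c a d = X) (t3 : c b d = X)
    (ma : c w a = X ∨ c w a = Y) (mb : c w b = X ∨ c w b = Y) (md : c w d = X ∨ c w d = Y) :
    MonoC4 Full c ∨ (c w a = Y ∧ c w b = Y) ∨ (c w a = Y ∧ c w d = Y) ∨
      (c w b = Y ∧ c w d = Y) := by
  rcases ma with ha | ha <;> rcases mb with hb | hb <;> rcases md with hd | hd
  · exact Or.inl (triC4 c hs X a b d w hab had hbd hwa hwb hwd t2 t3 ha hb)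
  · exact Or.inl (triC4 c hs X a b d w hab had hbd hwa hwb hwd t2 t3 ha hb)
  · exact Or.inl (triC4 c hs X a d b w had hab (fun h => hbd h.symm) hwa hwd hwb t1
      ((hs d b).trans t3) ha hd)
  · exact Or.inr (Or.inr (Or.inr ⟨hb, hd⟩))
  · exact Or.inl (triC4 c hs X b d a w hbd (fun h => hab h.symm) (fun h => had h.symm)
      hwb hwd hwa ((hs b a).trans t1) ((hs d a).trans t2) hb hd)
  · exact Or.inr (Or.inr (Or.inl ⟨ha, hd⟩))
  · exact Or.inr (Or.inl ⟨ha, hb⟩)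
  · exact Or.inr (Or.inl ⟨ha, hb⟩)
end Helpers
section K6sec
variable {V : Type} [DecidableEq V] {k : ℕ} (c : V → V → Fin k)

lemma hardcase (hs : ∀ a b, c a b = c b a) (X Y : Fin k) (a b d w1 w2 w3 : V)
    (hab : a ≠ b) (had : a ≠ d) (hbd : b ≠ d)
    (h12 : w1 ≠ w2) (h13 : w1 ≠ w3) (h23 : w2 ≠ w3)
    (h1a : w1 ≠ a) (h1b : w1 ≠ b) (h1d : w1 ≠ d)
    (h2a : w2 ≠ a) (h2b : w2 ≠ b) (h2d : w2 ≠ d)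
    (h3a : w3 ≠ a) (h3b : w3 ≠ b) (h3d : w3 ≠ d)
    (t1 : c a b = X) (t2 : c a d = X) (t3 : c b d = X)
    (p1a : c w1 a = Y) (p1b : c w1 b = Y)
    (p2b : c w2 b = Y) (p2d : c w2 d = Y)
    (p3a : c w3 a = Y) (p3d : c w3 d = Y)
    (q1 : c w1 d = X ∨ c w1 d = Y) (q2 : c w2 a = X ∨ c w2 a = Y)
    (q3 : c w3 b = X ∨ c w3 b = Y)
    (m12 : c w1 w2 = X ∨ c w1 w2 = Y) (m13 : c w1 w3 = X ∨ c w1 w3 = Y)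
    (m23 : c w2 w3 = X ∨ c w2 w3 = Y) :
    MonoC4 Full c := by
  -- if any "complement" edge is Y, two w's share a pair
  rcases q1 with q1 | q1
  · rcases q2 with q2 | q2
    · rcases q3 with q3 | q3
      · -- all complements X
        rcases m12 with m | m
        · -- C4 w1-w2-a-d
          exact mk4 c X w1 w2 a d h12 h1a h1d h2a h2d had m q2 t2 ((hs d w1).trans q1)
        · rcases m13 with m' | m'
          · -- C4 w1-w3-b-d
            exact mk4 c X w1 w3 b d h13 h1b h1d h3b h3d hbd m' q3 t3 ((hs d w1).trans q1)
          · rcases m23 with m'' | m''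
            · -- C4 w2-w3-b-a
              exact mk4 c X w2 w3 b a h23 h2b h2a h3b h3a (fun h => hab h.symm)
                m'' q3 ((hs b a).trans t1) ((hs a w2).trans q2)
            · -- all w-w edges Y : C4 b-w1-w3-w2
              exact mk4 c Y b w1 w3 w2 (fun h => h1b h.symm) (fun h => h3b h.symm)
                (fun h => h2b h.symm) h13 h12 (fun h => h23 h.symm)
                ((hs b w1).trans p1b) m' ((hs w3 w2).trans m'') p2b
      · -- w3 has Y to a,b,d : share pair (a,b) with w1
        exact shareC4 c hs Y a b w3 w1 hab (fun h => h13 h.symm) h3a h3b h1a h1b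
          p3a q3 p1a p1b
    · -- w2 has Y to a,b,d : share pair (a,b) with w1
      exact shareC4 c hs Y a b w2 w1 hab (fun h => h12 h.symm) h2a h2b h1a h1b
        q2 p2b p1a p1b
  · -- w1 has Y to a,b,d : share pair (b,d) with w2
    exact shareC4 c hs Y b d w1 w2 hbd h12 h1b h1d h2b h2d p1b q1 p2b p2d

end K6sec
section K6sec2
variable {V : Type} [DecidableEq V] {k : ℕ} (c : V → V → Fin k)

lemma K6B (hs : ∀ a b, c a b = c b a) (X Y : Fin k) (S6 : Finset V)
    (htwo : ∀ x ∈ S6, ∀ y ∈ S6, x ≠ y → c x y = X ∨ c x y = Y)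
    (hcard : 6 ≤ S6.card) (a b d : V) (ha : a ∈ S6) (hb : b ∈ S6) (hd : d ∈ S6)
    (hab : a ≠ b) (had : a ≠ d) (hbd : b ≠ d)
    (t1 : c a b = X) (t2 : c a d = X) (t3 : c b d = X) : MonoC4 Full c := by
  have hsubT : ({a, b, d} : Finset V) ⊆ S6 := by
    intro x hx; simp only [Finset.mem_insert, Finset.mem_singleton] at hx
    rcases hx with rfl | rfl | rfl <;> assumption
  have hcardT : ({a, b, d} : Finset V).card = 3 :=
    Finset.card_eq_three.mpr ⟨a, b, d, hab, had, hbd, rfl⟩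
  have hW : 3 ≤ (S6 \ {a, b, d}).card := by
    rw [Finset.card_sdiff_of_subset hsubT, hcardT]; omega
  obtain ⟨w1, w2, w3, hw1, hw2, hw3, h12, h13, h23⟩ := ex3 _ hW
  rw [Finset.mem_sdiff] at hw1 hw2 hw3
  simp only [Finset.mem_insert, Finset.mem_singleton, not_or] at hw1 hw2 hw3
  have hw1S := hw1.1
  have h1a := hw1.2.1
  have h1b := hw1.2.2.1
  have h1d := hw1.2.2.2
  have hw2S := hw2.1
  have h2a := hw2.2.1
  have h2b := hw2.2.2.1
  have h2d := hw2.2.2.2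
  have hw3S := hw3.1
  have h3a := hw3.2.1
  have h3b := hw3.2.2.1
  have h3d := hw3.2.2.2
  have D1a := htwo w1 hw1S a ha h1a
  have D1b := htwo w1 hw1S b hb h1b
  have D1d := htwo w1 hw1S d hd h1d
  have D2a := htwo w2 hw2S a ha h2a
  have D2b := htwo w2 hw2S b hb h2b
  have D2d := htwo w2 hw2S d hd h2d
  have D3a := htwo w3 hw3S a ha h3a
  have D3b := htwo w3 hw3S b hb h3b
  have D3d := htwo w3 hw3S d hd h3d
  have M12 := htwo w1 hw1S w2 hw2S h12
  have M13 := htwo w1 hw1S w3 hw3S h13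
  have M23 := htwo w2 hw2S w3 hw3S h23
  rcases stepw c hs X Y a b d w1 hab had hbd h1a h1b h1d t1 t2 t3 D1a D1b D1d with
    C | R1
  · exact C
  rcases stepw c hs X Y a b d w2 hab had hbd h2a h2b h2d t1 t2 t3 D2a D2b D2d with
    C | R2
  · exact C
  rcases stepw c hs X Y a b d w3 hab had hbd h3a h3b h3d t1 t2 t3 D3a D3b D3d with
    C | R3
  · exact C
  rcases R1 with p1 | p1 | p1 <;> rcases R2 with p2 | p2 | p2 <;>
    rcases R3 with p3 | p3 | p3
  · obtain ⟨e11, e12⟩ := p1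
    obtain ⟨e21, e22⟩ := p2
    obtain ⟨e31, e32⟩ := p3
    exact shareC4 c hs Y a b w1 w2 hab h12 h1a h1b h2a h2b e11 e12 e21 e22
  · obtain ⟨e11, e12⟩ := p1
    obtain ⟨e21, e22⟩ := p2
    obtain ⟨e31, e32⟩ := p3
    exact shareC4 c hs Y a b w1 w2 hab h12 h1a h1b h2a h2b e11 e12 e21 e22
  · obtain ⟨e11, e12⟩ := p1
    obtain ⟨e21, e22⟩ := p2
    obtain ⟨e31, e32⟩ := p3
    exact shareC4 c hs Y a b w1 w2 hab h12 h1a h1b h2a h2b e11 e12 e21 e22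
  · obtain ⟨e11, e12⟩ := p1
    obtain ⟨e21, e22⟩ := p2
    obtain ⟨e31, e32⟩ := p3
    exact shareC4 c hs Y a b w1 w3 hab h13 h1a h1b h3a h3b e11 e12 e31 e32
  · obtain ⟨e11, e12⟩ := p1
    obtain ⟨e21, e22⟩ := p2
    obtain ⟨e31, e32⟩ := p3
    exact shareC4 c hs Y a d w2 w3 had h23 h2a h2d h3a h3d e21 e22 e31 e32
  · obtain ⟨e11, e12⟩ := p1
    obtain ⟨e21, e22⟩ := p2
    obtain ⟨e31, e32⟩ := p3
    exact hardcase c hs X Y b a d w1 w2 w3 (Ne.symm hab) hbd had h12 h13 h23 h1b h1a h1d h2b h2a h2d h3b h3a h3d ((hs b a).trans t1) t3 t2 e12 e11 e21 e22 e31 e32 D1d D2b D3a M12 M13 M23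
  · obtain ⟨e11, e12⟩ := p1
    obtain ⟨e21, e22⟩ := p2
    obtain ⟨e31, e32⟩ := p3
    exact shareC4 c hs Y a b w1 w3 hab h13 h1a h1b h3a h3b e11 e12 e31 e32
  · obtain ⟨e11, e12⟩ := p1
    obtain ⟨e21, e22⟩ := p2
    obtain ⟨e31, e32⟩ := p3
    exact hardcase c hs X Y a b d w1 w2 w3 hab had hbd h12 h13 h23 h1a h1b h1d h2a h2b h2d h3a h3b h3d t1 t2 t3 e11 e12 e21 e22 e31 e32 D1d D2a D3b M12 M13 M23
  · obtain ⟨e11, e12⟩ := p1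
    obtain ⟨e21, e22⟩ := p2
    obtain ⟨e31, e32⟩ := p3
    exact shareC4 c hs Y b d w2 w3 hbd h23 h2b h2d h3b h3d e21 e22 e31 e32
  · obtain ⟨e11, e12⟩ := p1
    obtain ⟨e21, e22⟩ := p2
    obtain ⟨e31, e32⟩ := p3
    exact shareC4 c hs Y a b w2 w3 hab h23 h2a h2b h3a h3b e21 e22 e31 e32
  · obtain ⟨e11, e12⟩ := p1
    obtain ⟨e21, e22⟩ := p2
    obtain ⟨e31, e32⟩ := p3
    exact shareC4 c hs Y a d w1 w3 had h13 h1a h1d h3a h3d e11 e12 e31 e32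
  · obtain ⟨e11, e12⟩ := p1
    obtain ⟨e21, e22⟩ := p2
    obtain ⟨e31, e32⟩ := p3
    exact hardcase c hs X Y d a b w1 w2 w3 (Ne.symm had) (Ne.symm hbd) hab h12 h13 h23 h1d h1a h1b h2d h2a h2b h3d h3a h3b ((hs d a).trans t2) ((hs d b).trans t3) t1 e12 e11 e21 e22 e32 e31 D1b D2d D3a M12 M13 M23
  · obtain ⟨e11, e12⟩ := p1
    obtain ⟨e21, e22⟩ := p2
    obtain ⟨e31, e32⟩ := p3
    exact shareC4 c hs Y a d w1 w2 had h12 h1a h1d h2a h2d e11 e12 e21 e22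
  · obtain ⟨e11, e12⟩ := p1
    obtain ⟨e21, e22⟩ := p2
    obtain ⟨e31, e32⟩ := p3
    exact shareC4 c hs Y a d w1 w2 had h12 h1a h1d h2a h2d e11 e12 e21 e22
  · obtain ⟨e11, e12⟩ := p1
    obtain ⟨e21, e22⟩ := p2
    obtain ⟨e31, e32⟩ := p3
    exact shareC4 c hs Y a d w1 w2 had h12 h1a h1d h2a h2d e11 e12 e21 e22
  · obtain ⟨e11, e12⟩ := p1
    obtain ⟨e21, e22⟩ := p2
    obtain ⟨e31, e32⟩ := p3
    exact hardcase c hs X Y a d b w1 w2 w3 had hab (Ne.symm hbd) h12 h13 h23 h1a h1d h1b h2a h2d h2b h3a h3d h3b t2 t1 ((hs d b).trans t3) e11 e12 e22 e21 e31 e32 D1b D2a D3d M12 M13 M23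
  · obtain ⟨e11, e12⟩ := p1
    obtain ⟨e21, e22⟩ := p2
    obtain ⟨e31, e32⟩ := p3
    exact shareC4 c hs Y a d w1 w3 had h13 h1a h1d h3a h3d e11 e12 e31 e32
  · obtain ⟨e11, e12⟩ := p1
    obtain ⟨e21, e22⟩ := p2
    obtain ⟨e31, e32⟩ := p3
    exact shareC4 c hs Y b d w2 w3 hbd h23 h2b h2d h3b h3d e21 e22 e31 e32
  · obtain ⟨e11, e12⟩ := p1
    obtain ⟨e21, e22⟩ := p2
    obtain ⟨e31, e32⟩ := p3
    exact shareC4 c hs Y a b w2 w3 hab h23 h2a h2b h3a h3b e21 e22 e31 e32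
  · obtain ⟨e11, e12⟩ := p1
    obtain ⟨e21, e22⟩ := p2
    obtain ⟨e31, e32⟩ := p3
    exact hardcase c hs X Y d b a w1 w2 w3 (Ne.symm hbd) (Ne.symm had) (Ne.symm hab) h12 h13 h23 h1d h1b h1a h2d h2b h2a h3d h3b h3a ((hs d b).trans t3) ((hs d a).trans t2) ((hs b a).trans t1) e12 e11 e22 e21 e32 e31 D1a D2d D3b M12 M13 M23
  · obtain ⟨e11, e12⟩ := p1
    obtain ⟨e21, e22⟩ := p2
    obtain ⟨e31, e32⟩ := p3
    exact shareC4 c hs Y b d w1 w3 hbd h13 h1b h1d h3b h3d e11 e12 e31 e32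
  · obtain ⟨e11, e12⟩ := p1
    obtain ⟨e21, e22⟩ := p2
    obtain ⟨e31, e32⟩ := p3
    exact hardcase c hs X Y b d a w1 w2 w3 hbd (Ne.symm hab) (Ne.symm had) h12 h13 h23 h1b h1d h1a h2b h2d h2a h3b h3d h3a t3 ((hs b a).trans t1) ((hs d a).trans t2) e11 e12 e22 e21 e32 e31 D1a D2b D3d M12 M13 M23
  · obtain ⟨e11, e12⟩ := p1
    obtain ⟨e21, e22⟩ := p2
    obtain ⟨e31, e32⟩ := p3
    exact shareC4 c hs Y a d w2 w3 had h23 h2a h2d h3a h3d e21 e22 e31 e32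
  · obtain ⟨e11, e12⟩ := p1
    obtain ⟨e21, e22⟩ := p2
    obtain ⟨e31, e32⟩ := p3
    exact shareC4 c hs Y b d w1 w3 hbd h13 h1b h1d h3b h3d e11 e12 e31 e32
  · obtain ⟨e11, e12⟩ := p1
    obtain ⟨e21, e22⟩ := p2
    obtain ⟨e31, e32⟩ := p3
    exact shareC4 c hs Y b d w1 w2 hbd h12 h1b h1d h2b h2d e11 e12 e21 e22
  · obtain ⟨e11, e12⟩ := p1
    obtain ⟨e21, e22⟩ := p2
    obtain ⟨e31, e32⟩ := p3
    exact shareC4 c hs Y b d w1 w2 hbd h12 h1b h1d h2b h2d e11 e12 e21 e22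
  · obtain ⟨e11, e12⟩ := p1
    obtain ⟨e21, e22⟩ := p2
    obtain ⟨e31, e32⟩ := p3
    exact shareC4 c hs Y b d w1 w2 hbd h12 h1b h1d h2b h2d e11 e12 e21 e22

end K6sec2
section K6top
variable {V : Type} [DecidableEq V] {k : ℕ} (c : V → V → Fin k)

lemma K6 (hs : ∀ a b, c a b = c b a) (α β : Fin k) (S6 : Finset V)
    (hcard : 6 ≤ S6.card)
    (h2 : ∀ x ∈ S6, ∀ y ∈ S6, x ≠ y → c x y = α ∨ c x y = β) : MonoC4 Full c := by
  by_cases hαβ : α = β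
  · subst hαβ
    obtain ⟨a, b, d, e, ha, hb, hd, he, hab, had, hae, hbd, hbe, hde⟩ := ex4 S6 (by omega)
    exact mk4 c α a b d e hab had hae hbd hbe hde
      ((h2 a ha b hb hab).elim id id) ((h2 b hb d hd hbd).elim id id)
      ((h2 d hd e he hde).elim id id) ((h2 e he a ha (fun h => hae h.symm)).elim id id)
  · obtain ⟨z, hz⟩ := Finset.card_pos.mp (by omega : 0 < S6.card)
    set S' := S6.erase z with hS'
    have h5 : 5 ≤ S'.card := by rw [hS', Finset.card_erase_of_mem hz]; omega
    have hmap : ∀ x ∈ S', c z x ∈ ({α, β} : Finset (Fin k)) := by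
      intro x hx
      rcases h2 z hz x (S6.erase_subset z hx) (Finset.ne_of_mem_erase hx).symm with h | h <;>
        simp [h]
    have hlt : ({α, β} : Finset (Fin k)).card * 2 < S'.card := by
      have : ({α, β} : Finset (Fin k)).card ≤ 2 := Finset.card_insert_le α {β}
      omega
    obtain ⟨γ, hγt, hγF⟩ := Finset.exists_lt_card_fiber_of_mul_lt_card_of_maps_to hmap hlt
    obtain ⟨p, q, r, hp, hq, hr, hpq, hpr, hqr⟩ := ex3 _ (by omega : 3 ≤ (S'.filter (fun x => c z x = γ)).card)
    rw [Finset.mem_filter] at hp hq hr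
    have hpS : p ∈ S6 := S6.erase_subset z hp.1
    have hqS : q ∈ S6 := S6.erase_subset z hq.1
    have hrS : r ∈ S6 := S6.erase_subset z hr.1
    have hzp : z ≠ p := (Finset.ne_of_mem_erase hp.1).symm
    have hzq : z ≠ q := (Finset.ne_of_mem_erase hq.1).symm
    have hzr : z ≠ r := (Finset.ne_of_mem_erase hr.1).symm
    obtain ⟨δ, hγδ, h2'⟩ : ∃ δ, γ ≠ δ ∧ ∀ x ∈ S6, ∀ y ∈ S6, x ≠ y → c x y = γ ∨ c x y = δ := by
      simp only [Finset.mem_insert, Finset.mem_singleton] at hγt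
      rcases hγt with rfl | rfl
      · exact ⟨β, hαβ, h2⟩
      · exact ⟨α, fun h => hαβ h.symm, fun x hx y hy hxy => (h2 x hx y hy hxy).symm⟩
    by_cases h1 : c p q = γ
    · exact K6B c hs γ δ S6 h2' hcard z p q hz hpS hqS hzp hzq hpq hp.2 hq.2 h1
    by_cases h1' : c p r = γ
    · exact K6B c hs γ δ S6 h2' hcard z p r hz hpS hrS hzp hzr hpr hp.2 hr.2 h1'
    by_cases h1'' : c q r = γ
    · exact K6B c hs γ δ S6 h2' hcard z q r hz hqS hrS hzq hzr hqr hq.2 hr.2 h1''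
    · have h2'' : ∀ x ∈ S6, ∀ y ∈ S6, x ≠ y → c x y = δ ∨ c x y = γ :=
        fun x hx y hy hxy => (h2' x hx y hy hxy).symm
      exact K6B c hs δ γ S6 h2'' hcard p q r hpS hqS hrS hpq hpr hqr
        ((h2' p hpS q hqS hpq).resolve_left h1) ((h2' p hpS r hrS hpr).resolve_left h1')
        ((h2' q hqS r hrS hqr).resolve_left h1'')
end K6top
section Gallai
variable {V : Type} [DecidableEq V] {k : ℕ} (c : V → V → Fin k)

def st (S : Finset V) (γ : Fin k) : V → V → Prop :=
  fun u v => u ∈ S ∧ v ∈ S ∧ u ≠ v ∧ c u v = γ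

def Reach (S : Finset V) (γ : Fin k) : V → V → Prop :=
  Relation.ReflTransGen (st c S γ)

lemma st_symm (hs : ∀ a b, c a b = c b a) (S : Finset V) (γ : Fin k) :
    Symmetric (st c S γ) :=
  fun _ _ h => ⟨h.2.1, h.1, h.2.2.1.symm, (hs _ _).trans h.2.2.2⟩

lemma reach_symm (hs : ∀ a b, c a b = c b a) (S : Finset V) (γ : Fin k) :
    Symmetric (Reach c S γ) :=
  by haveI : Std.Symm (st c S γ) := ⟨st_symm c hs S γ⟩; exact fun a b h => (Relation.ReflTransGen.stdSymm (r := st c S γ)).symm a b h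

lemma moduleC (hs : ∀ a b, c a b = c b a)
    (hte : ∀ a b d : V, a ≠ b → a ≠ d → b ≠ d → c a b = c a d ∨ c a b = c b d ∨ c a d = c b d)
    (S : Finset V) (γ : Fin k) (a z : V) (hzS : z ∈ S) (hznr : ¬ Reach c S γ a z) :
    ∀ u, Reach c S γ a u → c z u = c z a := by
  intro u hu
  induction hu with
  | refl => rfl
  | tail hru hstep ih =>
    rename_i u' u
    obtain ⟨hu'S, huS, hne, hcol⟩ := hstep
    have hu'z : u' ≠ z := fun h => hznr (h ▸ hru)
    have huz : u ≠ z := fun h => hznr (h ▸ (hru.tail ⟨hu'S, huS, hne, hcol⟩))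
    have hczu' : c z u' ≠ γ := fun h =>
      hznr (hru.tail ⟨hu'S, hzS, hu'z, (hs u' z).trans h⟩)
    have hczu : c z u ≠ γ := fun h =>
      hznr ((hru.tail ⟨hu'S, huS, hne, hcol⟩).tail ⟨huS, hzS, huz, (hs u z).trans h⟩)
    rcases hte u' u z hne hu'z huz with h1 | h2 | h3
    · exact absurd ((hs z u').trans (h1.symm.trans hcol)) hczu'
    · exact absurd ((hs z u).trans (h2.symm.trans hcol)) hczu
    · calc c z u = c u z := hs z u
        _ = c u' z := h3.symm
        _ = c z u' := hs u' z
        _ = c z a := ih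

def IsGP (S : Finset V) (P : Finset (Finset V)) (α β : Fin k) : Prop :=
  2 ≤ P.card ∧ (∀ B ∈ P, B.Nonempty) ∧ (∀ B ∈ P, B ⊆ S) ∧ (∀ x ∈ S, ∃ B ∈ P, x ∈ B) ∧
  (∀ B ∈ P, ∀ B' ∈ P, B ≠ B' → ∀ x, x ∈ B → x ∉ B') ∧
  (∀ B ∈ P, ∀ B' ∈ P, B ≠ B' → ∃ γ, (γ = α ∨ γ = β) ∧ ∀ a ∈ B, ∀ b ∈ B', c a b = γ)

end Gallai
section GallaiMain
variable {V : Type} [DecidableEq V] {k : ℕ} (c : V → V → Fin k)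

lemma GPex (hs : ∀ a b, c a b = c b a)
    (hte : ∀ a b d : V, a ≠ b → a ≠ d → b ≠ d →
      c a b = c a d ∨ c a b = c b d ∨ c a d = c b d) :
    ∀ (n : ℕ) (S : Finset V), S.card = n → 2 ≤ S.card →
      ∃ P α β, IsGP c S P α β := by
  intro n
  induction n using Nat.strong_induction_on with
  | _ n IH =>
  intro S hcard h2card
  classical
  by_cases h2col : ∃ α β : Fin k, ∀ x ∈ S, ∀ y ∈ S, x ≠ y → c x y = α ∨ c x y = β
  · -- singleton partition
    obtain ⟨α, β, hαβ⟩ := h2col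
    refine ⟨S.image (fun x => ({x} : Finset V)), α, β, ?_, ?_, ?_, ?_, ?_, ?_⟩
    · rwa [Finset.card_image_of_injective _ Finset.singleton_injective]
    · intro B hB; obtain ⟨x, _, rfl⟩ := Finset.mem_image.mp hB; exact ⟨x, Finset.mem_singleton_self x⟩
    · intro B hB; obtain ⟨x, hx, rfl⟩ := Finset.mem_image.mp hB
      exact Finset.singleton_subset_iff.mpr hx
    · intro x hx; exact ⟨{x}, Finset.mem_image_of_mem _ hx, Finset.mem_singleton_self x⟩
    · intro B hB B' hB' hBB' x hxB hxB'
      obtain ⟨u, _, rfl⟩ := Finset.mem_image.mp hB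
      obtain ⟨v, _, rfl⟩ := Finset.mem_image.mp hB'
      rw [Finset.mem_singleton] at hxB hxB'
      exact hBB' (by rw [← hxB, hxB'])
    · intro B hB B' hB' hBB'
      obtain ⟨u, hu, rfl⟩ := Finset.mem_image.mp hB
      obtain ⟨v, hv, rfl⟩ := Finset.mem_image.mp hB'
      have huv : u ≠ v := fun h => hBB' (by rw [h])
      refine ⟨c u v, hαβ u hu v hv huv, ?_⟩
      intro p hp q hq
      rw [Finset.mem_singleton] at hp hq; rw [hp, hq]
  · by_cases hcomp : ∃ (γ : Fin k) (a b w : V), a ∈ S ∧ b ∈ S ∧ w ∈ S ∧ a ≠ b ∧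
        c a b = γ ∧ ¬ Reach c S γ a w
    · -- contract a component
      obtain ⟨γ, a, b, w, haS, hbS, hwS, hab, hcab, hnw⟩ := hcomp
      set C := S.filter (fun v => Reach c S γ a v) with hC
      have haC : a ∈ C := Finset.mem_filter.mpr ⟨haS, Relation.ReflTransGen.refl⟩
      have hbC : b ∈ C := Finset.mem_filter.mpr
        ⟨hbS, Relation.ReflTransGen.single ⟨haS, hbS, hab, hcab⟩⟩
      have hwC : w ∉ C := fun h => hnw (Finset.mem_filter.mp h).2
      have hCS : C ⊆ S := Finset.filter_subset _ _
      have hmod : ∀ z ∈ S, z ∉ C → ∀ u ∈ C, c z u = c z a := by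
        intro z hz hznC u huC
        exact moduleC c hs hte S γ a z hz
          (fun hr => hznC (Finset.mem_filter.mpr ⟨hz, hr⟩)) u (Finset.mem_filter.mp huC).2
      set S' := insert a (S \ C) with hS'
      have hS'sub : S' ⊆ S := Finset.insert_subset haS (Finset.sdiff_subset)
      have haS' : a ∈ S' := Finset.mem_insert_self a _
      have haw : a ≠ w := fun h => hwC (h ▸ haC)
      have hwS' : w ∈ S' := Finset.mem_insert_of_mem (Finset.mem_sdiff.mpr ⟨hwS, hwC⟩)
      have hCcard : 2 ≤ C.card := by
        have : ({a, b} : Finset V) ⊆ C :=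
          Finset.insert_subset haC (Finset.singleton_subset_iff.mpr hbC)
        calc 2 = ({a, b} : Finset V).card := (Finset.card_pair hab).symm
          _ ≤ C.card := Finset.card_le_card this
      have hcard' : S'.card < n := by
        have h1 : S'.card ≤ (S \ C).card + 1 := Finset.card_insert_le _ _
        have h2 : (S \ C).card = S.card - C.card := Finset.card_sdiff_of_subset hCS
        have h3 : C.card ≤ S.card := Finset.card_le_card hCS
        omega
      have h2' : 2 ≤ S'.card := by
        calc 2 = ({a, w} : Finset V).card := (Finset.card_pair haw).symm
          _ ≤ S'.card := Finset.card_le_card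
            (Finset.insert_subset haS' (Finset.singleton_subset_iff.mpr hwS'))
      obtain ⟨P', α, β, hq', hne', hsub', hcov', hdis', hmono'⟩ :=
        IH S'.card hcard' S' rfl h2'
      obtain ⟨B0, hB0P, haB0⟩ := hcov' a haS'
      set Bnew := B0 ∪ C with hBnew
      set P := insert Bnew (P'.erase B0) with hP
      have hbS' : b ∉ S' := by
        intro h
        rcases Finset.mem_insert.mp h with h | h
        · exact hab h.symm
        · exact (Finset.mem_sdiff.mp h).2 hbC
      have hBnewNotIn : Bnew ∉ P'.erase B0 := by
        intro h
        exact hbS' (hsub' _ (Finset.mem_of_mem_erase h) (Finset.mem_union_right _ hbC))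
      have hPcard : P.card = P'.card := by
        rw [hP, Finset.card_insert_of_notMem hBnewNotIn, Finset.card_erase_of_mem hB0P]
        omega
      -- no r in an old part lies in C
      have hCB' : ∀ B' ∈ P'.erase B0, ∀ r ∈ B', r ∉ C := by
        intro B' hB' r hr hrC
        have hrS' : r ∈ S' := hsub' _ (Finset.mem_of_mem_erase hB') hr
        rcases Finset.mem_insert.mp hrS' with h | h
        · exact hdis' B0 hB0P B' (Finset.mem_of_mem_erase hB')
            (Ne.symm (Finset.ne_of_mem_erase hB')) a haB0 (h ▸ hr)
        · exact (Finset.mem_sdiff.mp h).2 hrC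
      -- the key mono property for Bnew vs old parts
      have hkey : ∀ B' ∈ P'.erase B0, ∃ γ0, (γ0 = α ∨ γ0 = β) ∧
          ∀ p ∈ Bnew, ∀ r ∈ B', c p r = γ0 := by
        intro B' hB'
        obtain ⟨γ0, hγ0αβ, hγ0⟩ := hmono' B0 hB0P B' (Finset.mem_of_mem_erase hB')
          (Ne.symm (Finset.ne_of_mem_erase hB'))
        refine ⟨γ0, hγ0αβ, ?_⟩
        intro p hp r hr
        rcases Finset.mem_union.mp hp with hpB0 | hpC
        · exact hγ0 p hpB0 r hr
        · have hrS : r ∈ S := hS'sub (hsub' _ (Finset.mem_of_mem_erase hB') hr)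
          have hrC : r ∉ C := hCB' B' hB' r hr
          calc c p r = c r p := hs p r
            _ = c r a := hmod r hrS hrC p hpC
            _ = c a r := hs r a
            _ = γ0 := hγ0 a haB0 r hr
      refine ⟨P, α, β, ?_, ?_, ?_, ?_, ?_, ?_⟩
      · rw [hPcard]; exact hq'
      · intro B hB
        rcases Finset.mem_insert.mp hB with rfl | hB
        · exact ⟨a, Finset.mem_union_left _ haB0⟩
        · exact hne' _ (Finset.mem_of_mem_erase hB)
      · intro B hB
        rcases Finset.mem_insert.mp hB with rfl | hB
        · exact Finset.union_subset ((hsub' _ hB0P).trans hS'sub) hCS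
        · exact (hsub' _ (Finset.mem_of_mem_erase hB)).trans hS'sub
      · intro x hx
        by_cases hxC : x ∈ C
        · exact ⟨Bnew, Finset.mem_insert_self _ _, Finset.mem_union_right _ hxC⟩
        · have hxS' : x ∈ S' := Finset.mem_insert_of_mem (Finset.mem_sdiff.mpr ⟨hx, hxC⟩)
          obtain ⟨B', hB'P, hxB'⟩ := hcov' x hxS'
          by_cases hBB0 : B' = B0
          · exact ⟨Bnew, Finset.mem_insert_self _ _,
              Finset.mem_union_left _ (hBB0 ▸ hxB')⟩
          · exact ⟨B', Finset.mem_insert_of_mem (Finset.mem_erase.mpr ⟨hBB0, hB'P⟩), hxB'⟩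
      · -- disjointness
        intro B hB B' hB' hBB' x hxB hxB'
        rcases Finset.mem_insert.mp hB with rfl | hB <;>
          rcases Finset.mem_insert.mp hB' with h' | hB'
        · exact hBB' h'.symm
        · rcases Finset.mem_union.mp hxB with h | h
          · exact hdis' B0 hB0P B' (Finset.mem_of_mem_erase hB')
              (Ne.symm (Finset.ne_of_mem_erase hB')) x h hxB'
          · exact hCB' B' hB' x hxB' h
        · subst h'
          rcases Finset.mem_union.mp hxB' with h | h
          · exact hdis' B0 hB0P B (Finset.mem_of_mem_erase hB)
              (Ne.symm (Finset.ne_of_mem_erase hB)) x h hxB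
          · exact hCB' B hB x hxB h
        · exact hdis' B (Finset.mem_of_mem_erase hB) B' (Finset.mem_of_mem_erase hB')
            hBB' x hxB hxB'
      · -- mono
        intro B hB B' hB' hBB'
        rcases Finset.mem_insert.mp hB with rfl | hB <;>
          rcases Finset.mem_insert.mp hB' with h' | hB'
        · exact absurd h'.symm hBB'
        · exact hkey B' hB'
        · subst h'
          obtain ⟨γ0, hγ0αβ, hγ0⟩ := hkey B hB
          exact ⟨γ0, hγ0αβ, fun p hp r hr => (hs p r).trans (hγ0 r hr p hp)⟩
        · exact hmono' B (Finset.mem_of_mem_erase hB) B' (Finset.mem_of_mem_erase hB') hBB'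
    · -- every used color is spanning-connected: derive a rainbow triangle, contradiction
      exfalso
      have hspan : ∀ (γ : Fin k) (a b w : V), a ∈ S → b ∈ S → w ∈ S → a ≠ b →
          c a b = γ → Reach c S γ a w := by
        intro γ a b w h1 h2 h3 h4 h5
        by_contra hcon
        exact hcomp ⟨γ, a, b, w, h1, h2, h3, h4, h5, hcon⟩
      obtain ⟨a1, ha1S, b1, hb1S, hab1⟩ := ex2 S h2card
      have hex2 : ¬ ∀ x ∈ S, ∀ y ∈ S, x ≠ y → c x y = c a1 b1 ∨ c x y = c a1 b1 :=
        fun h => h2col ⟨c a1 b1, c a1 b1, h⟩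
      push_neg at hex2
      obtain ⟨a2, ha2S, b2, hb2S, hab2, hne2, -⟩ := hex2
      have hex3 : ¬ ∀ x ∈ S, ∀ y ∈ S, x ≠ y → c x y = c a1 b1 ∨ c x y = c a2 b2 :=
        fun h => h2col ⟨c a1 b1, c a2 b2, h⟩
      push_neg at hex3
      obtain ⟨a3, ha3S, b3, hb3S, hab3, hne31, hne32⟩ := hex3
      have h3card : 3 ≤ S.card := by
        by_contra hlt
        have hS2 : S.card = 2 := by omega
        obtain ⟨u, v, huv, rfl⟩ := Finset.card_eq_two.mp hS2
        refine h2col ⟨c u v, c v u, ?_⟩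
        intro x hx y hy hxy
        simp only [Finset.mem_insert, Finset.mem_singleton] at hx hy
        rcases hx with rfl | rfl <;> rcases hy with rfl | rfl
        · exact absurd rfl hxy
        · exact Or.inl rfl
        · exact Or.inr rfl
        · exact absurd rfl hxy
      set w := a1 with hw
      have hwS : w ∈ S := ha1S
      set S' := S.erase w with hS'def
      have hcard' : S'.card < n := by
        rw [hS'def, Finset.card_erase_of_mem hwS]; omega
      have h2' : 2 ≤ S'.card := by
        rw [hS'def, Finset.card_erase_of_mem hwS]; omega
      obtain ⟨P', α, β, hq', hne', hsub', hcov', hdis', hmono'⟩ :=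
        IH S'.card hcard' S' rfl h2'
      have hzw_ne : ∀ B ∈ P', ∀ z ∈ B, z ≠ w := by
        intro B hB z hz
        exact (Finset.mem_erase.mp (hsub' B hB hz)).1
      have hother : ∀ B ∈ P', ∃ B' ∈ P', B' ≠ B := by
        intro B hB
        obtain ⟨B1, hB1, B2, hB2, hB12⟩ := ex2 P' hq'
        by_cases h : B1 = B
        · refine ⟨B2, hB2, ?_⟩; rw [← h]; exact (Ne.symm hB12)
        · exact ⟨B1, hB1, h⟩
      have hpart : ∀ (γ : Fin k), γ ≠ α → γ ≠ β →
          (∃ u v, u ∈ S ∧ v ∈ S ∧ u ≠ v ∧ c u v = γ) →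
          ∀ B ∈ P', ∃ z ∈ B, c z w = γ := by
        rintro γ hγα hγβ ⟨u0, v0, hu0, hv0, huv0, hcuv0⟩ B hB
        obtain ⟨b0, hb0⟩ := hne' B hB
        have hb0S : b0 ∈ S := S.erase_subset w (hsub' B hB hb0)
        have r1 : Reach c S γ u0 b0 := hspan γ u0 v0 b0 hu0 hv0 hb0S huv0 hcuv0
        have r2 : Reach c S γ u0 w := hspan γ u0 v0 w hu0 hv0 hwS huv0 hcuv0
        have hreach : Reach c S γ b0 w :=
          Relation.ReflTransGen.trans (reach_symm c hs S γ r1) r2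
        have main : ∀ z, Reach c S γ z w → z ∈ B → ∃ z' ∈ B, c z' w = γ := by
          intro z hz
          induction hz using Relation.ReflTransGen.head_induction_on with
          | refl =>
            intro hwB
            exact absurd (hsub' B hB hwB) (Finset.notMem_erase w S)
          | head hstep htail ih =>
            rename_i z y
            intro hzB
            obtain ⟨hzS, hyS, hzy, hczy⟩ := hstep
            by_cases hyw : y = w
            · exact ⟨z, hzB, hyw ▸ hczy⟩
            · have hyS' : y ∈ S' := Finset.mem_erase.mpr ⟨hyw, hyS⟩
              obtain ⟨B'', hB''P, hyB''⟩ := hcov' y hyS'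
              by_cases hBB'' : B'' = B
              · exact ih (hBB'' ▸ hyB'')
              · obtain ⟨γ0, hγ0αβ, hγ0⟩ := hmono' B hB B'' hB''P (fun h => hBB'' h.symm)
                have hγγ0 : γ = γ0 := hczy.symm.trans (hγ0 z hzB y hyB'')
                rcases hγ0αβ with rfl | rfl
                · exact absurd hγγ0 hγα
                · exact absurd hγγ0 hγβ
        exact main b0 hreach hb0
      have hatw : ∀ (γ : Fin k), (∃ u v, u ∈ S ∧ v ∈ S ∧ u ≠ v ∧ c u v = γ) →
          ∃ z ∈ S', c z w = γ := by
        rintro γ ⟨u0, v0, hu0, hv0, huv0, hcuv0⟩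
        have r2 : Reach c S γ u0 w := hspan γ u0 v0 w hu0 hv0 hwS huv0 hcuv0
        rcases Relation.ReflTransGen.cases_tail r2 with heq | ⟨z, hz1, hz2⟩
        · refine ⟨v0, Finset.mem_erase.mpr ⟨heq ▸ (Ne.symm huv0), hv0⟩, ?_⟩
          rw [heq]
          exact (hs v0 u0).trans hcuv0
        · obtain ⟨hzS, hwS2, hzw, hczw⟩ := hz2
          exact ⟨z, Finset.mem_erase.mpr ⟨hzw, hzS⟩, hczw⟩
      have case_i : ∀ γ δ : Fin k, γ ≠ δ → γ ≠ α → γ ≠ β → δ ≠ α → δ ≠ β →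
          (∃ u v, u ∈ S ∧ v ∈ S ∧ u ≠ v ∧ c u v = γ) →
          (∃ u v, u ∈ S ∧ v ∈ S ∧ u ≠ v ∧ c u v = δ) → False := by
        intro γ δ hγδ hγα hγβ hδα hδβ hγu hδu
        obtain ⟨B1, hB1, B2, hB2, hB12⟩ := ex2 P' hq'
        obtain ⟨z1, hz1B, hz1w⟩ := hpart γ hγα hγβ hγu B1 hB1
        obtain ⟨z2, hz2B, hz2w⟩ := hpart δ hδα hδβ hδu B2 hB2
        obtain ⟨ε, hεαβ, hε⟩ := hmono' B1 hB1 B2 hB2 hB12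
        have hz12 : z1 ≠ z2 := fun h => hdis' B1 hB1 B2 hB2 hB12 z1 hz1B (h ▸ hz2B)
        have hz1w' : z1 ≠ w := hzw_ne B1 hB1 z1 hz1B
        have hz2w' : z2 ≠ w := hzw_ne B2 hB2 z2 hz2B
        have hc12 : c z1 z2 = ε := hε z1 hz1B z2 hz2B
        rcases hte z1 z2 w hz12 hz1w' hz2w' with h | h | h
        · have : ε = γ := hc12.symm.trans (h.trans hz1w)
          rcases hεαβ with rfl | rfl
          · exact hγα this.symm
          · exact hγβ this.symm
        · have : ε = δ := hc12.symm.trans (h.trans hz2w)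
          rcases hεαβ with rfl | rfl
          · exact hδα this.symm
          · exact hδβ this.symm
        · exact hγδ (hz1w.symm.trans (h.trans hz2w))
      have case_ii : ∀ γ : Fin k, γ ≠ α → γ ≠ β →
          (∃ u v, u ∈ S ∧ v ∈ S ∧ u ≠ v ∧ c u v = γ) → α ≠ β →
          (∃ u v, u ∈ S ∧ v ∈ S ∧ u ≠ v ∧ c u v = α) →
          (∃ u v, u ∈ S ∧ v ∈ S ∧ u ≠ v ∧ c u v = β) → False := by
        intro γ hγα hγβ hγu hαβ hαu hβu
        by_cases hδ : ∃ v ∈ S', c v w ≠ α ∧ c v w ≠ β ∧ c v w ≠ γ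
        · obtain ⟨v, hvS', hδ1, hδ2, hδ3⟩ := hδ
          obtain ⟨Bj, hBj, hvBj⟩ := hcov' v hvS'
          obtain ⟨Bi, hBi, hBij⟩ := hother Bj hBj
          obtain ⟨zi, hziB, hziw⟩ := hpart γ hγα hγβ hγu Bi hBi
          obtain ⟨ε, hεαβ, hε⟩ := hmono' Bi hBi Bj hBj hBij
          have hziv : zi ≠ v := fun h => hdis' Bi hBi Bj hBj hBij zi hziB (h ▸ hvBj)
          have hziw' : zi ≠ w := hzw_ne Bi hBi zi hziB
          have hvw : v ≠ w := (Finset.mem_erase.mp hvS').1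
          have hcziv : c zi v = ε := hε zi hziB v hvBj
          rcases hte zi v w hziv hziw' hvw with h | h | h
          · have : ε = γ := hcziv.symm.trans (h.trans hziw)
            rcases hεαβ with rfl | rfl
            · exact hγα this.symm
            · exact hγβ this.symm
          · have : ε = c v w := hcziv.symm.trans h
            rcases hεαβ with rfl | rfl
            · exact hδ1 this.symm
            · exact hδ2 this.symm
          · exact hδ3 ((h.symm.trans hziw).symm).symm
        · have hall : ∀ v ∈ S', c v w = α ∨ c v w = β ∨ c v w = γ := by
            intro v hv
            by_contra hcon
            push_neg at hcon
            exact hδ ⟨v, hv, hcon.1, hcon.2.1, hcon.2.2⟩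
          obtain ⟨vα, hvαS', hvαw⟩ := hatw α hαu
          obtain ⟨vβ, hvβS', hvβw⟩ := hatw β hβu
          obtain ⟨Bα, hBα, hvαB⟩ := hcov' vα hvαS'
          obtain ⟨Bβ, hBβ, hvβB⟩ := hcov' vβ hvβS'
          have hvαw' : vα ≠ w := (Finset.mem_erase.mp hvαS').1
          have hvβw' : vβ ≠ w := (Finset.mem_erase.mp hvβS').1
          have hBαβ : Bα ≠ Bβ := by
            intro heqB
            obtain ⟨B', hB', hB'ne⟩ := hother Bα hBα
            obtain ⟨z', hz'B, hz'w⟩ := hpart γ hγα hγβ hγu B' hB'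
            obtain ⟨ε, hεαβ, hε⟩ := hmono' Bα hBα B' hB' (Ne.symm hB'ne)
            have hz'w' : z' ≠ w := hzw_ne B' hB' z' hz'B
            have hvαz' : vα ≠ z' := fun h =>
              hdis' Bα hBα B' hB' (Ne.symm hB'ne) vα hvαB (h ▸ hz'B)
            have hvβz' : vβ ≠ z' := fun h =>
              hdis' Bα hBα B' hB' (Ne.symm hB'ne) vβ (heqB ▸ hvβB) (h ▸ hz'B)
            have e1 : ε = α := by
              rcases hte vα z' w hvαz' hvαw' hz'w' with h | h | h
              · exact ((hε vα hvαB z' hz'B).symm.trans (h.trans hvαw))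
              · have : ε = γ := (hε vα hvαB z' hz'B).symm.trans (h.trans hz'w)
                rcases hεαβ with rfl | rfl
                · exact absurd this.symm hγα
                · exact absurd this.symm hγβ
              · exact absurd (hvαw.symm.trans (h.trans hz'w)).symm hγα
            have e2 : ε = β := by
              rcases hte vβ z' w hvβz' hvβw' hz'w' with h | h | h
              · exact ((hε vβ (heqB ▸ hvβB) z' hz'B).symm.trans (h.trans hvβw))
              · have : ε = γ := (hε vβ (heqB ▸ hvβB) z' hz'B).symm.trans (h.trans hz'w)
                rcases hεαβ with rfl | rfl
                · exact absurd this.symm hγα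
                · exact absurd this.symm hγβ
              · exact absurd (hvβw.symm.trans (h.trans hz'w)).symm hγβ
            exact hαβ (e1.symm.trans e2)
          obtain ⟨ε, hεαβ, hε⟩ := hmono' Bα hBα Bβ hBβ hBαβ
          obtain ⟨zβ, hzβB, hzβw⟩ := hpart γ hγα hγβ hγu Bβ hBβ
          obtain ⟨zα, hzαB, hzαw⟩ := hpart γ hγα hγβ hγu Bα hBα
          have hzβw' : zβ ≠ w := hzw_ne Bβ hBβ zβ hzβB
          have hzαw' : zα ≠ w := hzw_ne Bα hBα zα hzαB
          have hvαzβ : vα ≠ zβ := fun h => hdis' Bα hBα Bβ hBβ hBαβ vα hvαB (h ▸ hzβB)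
          have hvβzα : vβ ≠ zα := fun h => hdis' Bβ hBβ Bα hBα (Ne.symm hBαβ) vβ hvβB (h ▸ hzαB)
          have e1 : ε = α := by
            rcases hte vα zβ w hvαzβ hvαw' hzβw' with h | h | h
            · exact ((hε vα hvαB zβ hzβB).symm.trans (h.trans hvαw))
            · have : ε = γ := (hε vα hvαB zβ hzβB).symm.trans (h.trans hzβw)
              rcases hεαβ with rfl | rfl
              · exact absurd this.symm hγα
              · exact absurd this.symm hγβ
            · exact absurd (hvαw.symm.trans (h.trans hzβw)).symm hγα
          have e2 : ε = β := by
            have hczαvβ : c vβ zα = ε := (hs vβ zα).trans (hε zα hzαB vβ hvβB)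
            rcases hte vβ zα w hvβzα hvβw' hzαw' with h | h | h
            · exact (hczαvβ.symm.trans (h.trans hvβw))
            · have : ε = γ := hczαvβ.symm.trans (h.trans hzαw)
              rcases hεαβ with rfl | rfl
              · exact absurd this.symm hγα
              · exact absurd this.symm hγβ
            · exact absurd (hvβw.symm.trans (h.trans hzαw)).symm hγβ
          exact hαβ (e1.symm.trans e2)
      -- now the three used colors
      have hu1 : ∃ u v, u ∈ S ∧ v ∈ S ∧ u ≠ v ∧ c u v = c a1 b1 := ⟨a1, b1, ha1S, hb1S, hab1, rfl⟩
      have hu2 : ∃ u v, u ∈ S ∧ v ∈ S ∧ u ≠ v ∧ c u v = c a2 b2 := ⟨a2, b2, ha2S, hb2S, hab2, rfl⟩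
      have hu3 : ∃ u v, u ∈ S ∧ v ∈ S ∧ u ≠ v ∧ c u v = c a3 b3 := ⟨a3, b3, ha3S, hb3S, hab3, rfl⟩
      have husedeq : ∀ γ δ : Fin k, γ = δ → (∃ u v, u ∈ S ∧ v ∈ S ∧ u ≠ v ∧ c u v = γ) →
          (∃ u v, u ∈ S ∧ v ∈ S ∧ u ≠ v ∧ c u v = δ) := by rintro γ δ rfl h; exact h
      by_cases o1 : c a1 b1 ≠ α ∧ c a1 b1 ≠ β <;>
        by_cases o2 : c a2 b2 ≠ α ∧ c a2 b2 ≠ β <;>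
          by_cases o3 : c a3 b3 ≠ α ∧ c a3 b3 ≠ β
      · exact case_i _ _ (Ne.symm hne2) o1.1 o1.2 o2.1 o2.2 hu1 hu2
      · exact case_i _ _ (Ne.symm hne2) o1.1 o1.2 o2.1 o2.2 hu1 hu2
      · exact case_i _ _ (Ne.symm hne31) o1.1 o1.2 o3.1 o3.2 hu1 hu3
      · -- only c a1 b1 outside; γ2, γ3 ∈ {α, β}
        rw [not_and_or, not_not, not_not] at o2 o3
        rcases o2 with h2 | h2 <;> rcases o3 with h3 | h3
        · exact hne32 (h3.trans h2.symm)
        · exact case_ii _ o1.1 o1.2 hu1 (by rw [← h2, ← h3]; exact Ne.symm hne32)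
            (husedeq _ _ h2 hu2) (husedeq _ _ h3 hu3)
        · exact case_ii _ o1.1 o1.2 hu1 (by rw [← h3, ← h2]; exact hne32)
            (husedeq _ _ h3 hu3) (husedeq _ _ h2 hu2)
        · exact hne32 (h3.trans h2.symm)
      · exact case_i _ _ (Ne.symm hne32) o2.1 o2.2 o3.1 o3.2 hu2 hu3
      · -- only γ2 outside; γ1, γ3 ∈ {α, β}
        rw [not_and_or, not_not, not_not] at o1 o3
        rcases o1 with h1 | h1 <;> rcases o3 with h3 | h3
        · exact hne31 (h3.trans h1.symm)
        · exact case_ii _ o2.1 o2.2 hu2 (by rw [← h1, ← h3]; exact Ne.symm hne31)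
            (husedeq _ _ h1 hu1) (husedeq _ _ h3 hu3)
        · exact case_ii _ o2.1 o2.2 hu2 (by rw [← h3, ← h1]; exact hne31)
            (husedeq _ _ h3 hu3) (husedeq _ _ h1 hu1)
        · exact hne31 (h3.trans h1.symm)
      · -- only γ3 outside; γ1, γ2 ∈ {α, β}
        rw [not_and_or, not_not, not_not] at o1 o2
        rcases o1 with h1 | h1 <;> rcases o2 with h2 | h2
        · exact hne2 (h2.trans h1.symm)
        · exact case_ii _ o3.1 o3.2 hu3 (by rw [← h1, ← h2]; exact Ne.symm hne2)
            (husedeq _ _ h1 hu1) (husedeq _ _ h2 hu2)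
        · exact case_ii _ o3.1 o3.2 hu3 (by rw [← h2, ← h1]; exact hne2)
            (husedeq _ _ h2 hu2) (husedeq _ _ h1 hu1)
        · exact hne2 (h2.trans h1.symm)
      · -- all three inside {α, β}: impossible
        rw [not_and_or, not_not, not_not] at o1 o2 o3
        rcases o1 with h1 | h1 <;> rcases o2 with h2 | h2 <;> rcases o3 with h3 | h3 <;>
          first
            | exact hne2 (h2.trans h1.symm)
            | exact hne31 (h3.trans h1.symm)
            | exact hne32 (h3.trans h2.symm)
section MainInd
variable {V : Type} [DecidableEq V] {k : ℕ} (c : V → V → Fin k)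

lemma insideStar (hs : ∀ a b, c a b = c b a)
    (hte : ∀ a b d : V, a ≠ b → a ≠ d → b ≠ d →
      c a b = c a d ∨ c a b = c b d ∨ c a d = c b d)
    (CS : Finset (Fin k)) (S B0 : Finset V) (hB0S : B0 ⊆ S)
    (hclo : ∀ x ∈ S, ∀ y ∈ S, x ≠ y → c x y ∈ CS)
    (γ : Fin k) (x : V) (hxS : x ∈ S) (hxB0 : x ∉ B0)
    (hstar : ∀ p ∈ B0, c p x = γ) (hcard : CS.card + 2 ≤ B0.card) :
    MonoC4 Full c ∨ ∀ u ∈ B0, ∀ v ∈ B0, u ≠ v → c u v ≠ γ := by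
  by_cases hc1in : ∃ u ∈ B0, ∃ v ∈ B0, u ≠ v ∧ c u v = γ
  · left
    obtain ⟨u, hu, v, hv, huv, hcuv⟩ := hc1in
    have hux : u ≠ x := fun h => hxB0 (h ▸ hu)
    have hvx : v ≠ x := fun h => hxB0 (h ▸ hv)
    by_cases hz : ∃ z ∈ B0, z ≠ u ∧ z ≠ v ∧ (c u z = γ ∨ c v z = γ)
    · obtain ⟨z, hzB, hzu, hzv, hzc⟩ := hz
      have hzx : z ≠ x := fun h => hxB0 (h ▸ hzB)
      rcases hzc with h | h
      · exact mk4 c γ z u v x hzu hzv hzx huv hux hvx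
          ((hs z u).trans h) hcuv (hstar v hv) ((hs x z).trans (hstar z hzB))
      · exact mk4 c γ z v u x hzv hzu hzx (Ne.symm huv) hvx hux
          ((hs z v).trans h) ((hs v u).trans hcuv) (hstar u hu) ((hs x z).trans (hstar z hzB))
    · push_neg at hz
      have htw : ∀ z ∈ B0, z ≠ u → z ≠ v → c u z = c v z := by
        intro z hzB hzu hzv
        rcases hte u v z huv (Ne.symm hzu) (Ne.symm hzv) with h | h | h
        · exact absurd (h.symm.trans hcuv) (hz z hzB hzu hzv).1
        · exact absurd (h.symm.trans hcuv) (hz z hzB hzu hzv).2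
        · exact h
      by_cases hcol2 : ∃ z ∈ B0, ∃ z' ∈ B0, z ≠ z' ∧ z ≠ u ∧ z ≠ v ∧ z' ≠ u ∧ z' ≠ v ∧
          c u z = c u z'
      · obtain ⟨z, hzB, z', hz'B, hzz', hzu, hzv, hz'u, hz'v, heqc⟩ := hcol2
        exact mk4 c (c u z) z u z' v hzu hzz' hzv (Ne.symm hz'u) huv hz'v
          (hs z u) heqc.symm ((hs z' v).trans ((htw z' hz'B hz'u hz'v).symm.trans heqc.symm))
          (htw z hzB hzu hzv).symm
      · exfalso
        push_neg at hcol2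
        have hTcard : ((B0.erase u).erase v).card = B0.card - 2 := by
          rw [Finset.card_erase_of_mem (Finset.mem_erase.mpr ⟨Ne.symm huv, hv⟩),
            Finset.card_erase_of_mem hu]; omega
        have hinj : ∀ z ∈ (B0.erase u).erase v, ∀ z' ∈ (B0.erase u).erase v, (fun w => c u w) z = (fun w => c u w) z' → z = z' := by
          intro z hz1 z' hz1' heq
          simp only [Finset.mem_erase] at hz1 hz1'
          by_contra hne
          exact hcol2 z hz1.2.2 z' hz1'.2.2 hne hz1.2.1 hz1.1 hz1'.2.1 hz1'.1 heq
        have hmaps : ∀ z ∈ (B0.erase u).erase v, c u z ∈ CS.erase γ := by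
          intro z hz1
          simp only [Finset.mem_erase] at hz1
          exact Finset.mem_erase.mpr ⟨(hz z hz1.2.2 hz1.2.1 hz1.1).1,
            hclo u (hB0S hu) z (hB0S hz1.2.2) (fun h => hz1.2.1 h.symm)⟩
        have hle : ((B0.erase u).erase v).card ≤ (CS.erase γ).card :=
          Finset.card_le_card_of_injOn _ hmaps hinj
        have hγCS : γ ∈ CS := by
          have := hclo u (hB0S hu) v (hB0S hv) huv
          rwa [hcuv] at this
        rw [Finset.card_erase_of_mem hγCS] at hle
        have h1 : 1 ≤ CS.card := Finset.card_pos.mpr ⟨γ, hγCS⟩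
        omega
  · right
    intro u hu v hv huv h
    exact hc1in ⟨u, hu, v, hv, huv, h⟩

end MainInd
section MainInd2
variable {V : Type} [DecidableEq V] {k : ℕ} (c : V → V → Fin k)

lemma mainC4 (hs : ∀ a b, c a b = c b a)
    (hte : ∀ a b d : V, a ≠ b → a ≠ d → b ≠ d →
      c a b = c a d ∨ c a b = c b d ∨ c a d = c b d) :
    ∀ (t : ℕ) (CS : Finset (Fin k)) (S : Finset V),
      CS.card = t →
      (∀ x ∈ S, ∀ y ∈ S, x ≠ y → c x y ∈ CS) →
      CS.card + 4 ≤ S.card → MonoC4 Full c := by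
  intro t
  induction t using Nat.strong_induction_on with
  | _ t IH =>
  intro CS S hCSt hclo hcard
  classical
  rcases Nat.lt_or_ge t 2 with hlt | hge
  · -- base cases t = 0, 1
    interval_cases t
    · obtain ⟨a, ha, b, hb, hab⟩ := ex2 S (by omega)
      have := hclo a ha b hb hab
      rw [Finset.card_eq_zero.mp hCSt] at this
      exact absurd this (Finset.notMem_empty _)
    · obtain ⟨γ, rfl⟩ := Finset.card_eq_one.mp hCSt
      obtain ⟨a, b, d, e, ha, hb, hd, he, hab, had, hae, hbd, hbe, hde⟩ := ex4 S (by omega)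
      exact mk4 c γ a b d e hab had hae hbd hbe hde
        (Finset.mem_singleton.mp (hclo a ha b hb hab))
        (Finset.mem_singleton.mp (hclo b hb d hd hbd))
        (Finset.mem_singleton.mp (hclo d hd e he hde))
        (Finset.mem_singleton.mp (hclo e he a ha (Ne.symm hae)))
  · obtain ⟨P, α, β, hq, hne, hsub, hcov, hdis, hmono⟩ :=
      GPex c hs hte S.card S rfl (by omega)
    by_cases hbig2 : ∃ B ∈ P, ∃ B' ∈ P, B ≠ B' ∧ 1 < B.card ∧ 1 < B'.card
    · obtain ⟨B, hB, B', hB', hBB', h1, h2⟩ := hbig2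
      obtain ⟨a, ha, b, hb, hab⟩ := ex2 B h1
      obtain ⟨a', ha', b', hb', hab'⟩ := ex2 B' h2
      obtain ⟨γ, hγαβ, hγ⟩ := hmono B hB B' hB' hBB'
      have haa' : a ≠ a' := fun h => hdis B hB B' hB' hBB' a ha (h ▸ ha')
      have hab'2 : a ≠ b' := fun h => hdis B hB B' hB' hBB' a ha (h ▸ hb')
      have hba' : b ≠ a' := fun h => hdis B hB B' hB' hBB' b hb (h ▸ ha')
      have hbb' : b ≠ b' := fun h => hdis B hB B' hB' hBB' b hb (h ▸ hb')
      exact mk4 c γ a a' b b' haa' hab hab'2 (Ne.symm hba') hab' hbb'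
        (hγ a ha a' ha') ((hs a' b).trans (hγ b hb a' ha')) (hγ b hb b' hb')
        ((hs b' a).trans (hγ a ha b' hb'))
    · by_cases hallsing : ∀ B ∈ P, B.card = 1
      · have h2c : ∀ x ∈ S, ∀ y ∈ S, x ≠ y → c x y = α ∨ c x y = β := by
          intro x hx y hy hxy
          obtain ⟨Bx, hBxP, hxBx⟩ := hcov x hx
          obtain ⟨By, hByP, hyBy⟩ := hcov y hy
          have hBxBy : Bx ≠ By := by
            intro h
            obtain ⟨u, hu⟩ := Finset.card_eq_one.mp (hallsing Bx hBxP)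
            apply hxy
            have hy2 : y ∈ Bx := by rw [h]; exact hyBy
            rw [hu] at hxBx hy2
            exact (Finset.mem_singleton.mp hxBx).trans (Finset.mem_singleton.mp hy2).symm
          obtain ⟨γ, hγαβ, hγ⟩ := hmono Bx hBxP By hByP hBxBy
          rcases hγαβ with rfl | rfl
          · exact Or.inl (hγ x hxBx y hyBy)
          · exact Or.inr (hγ x hxBx y hyBy)
        exact K6 c hs α β S (by omega) h2c
      · -- exactly one big part B0
        push_neg at hallsing
        obtain ⟨B0, hB0, hB0c⟩ := hallsing
        have h1B0 : 1 < B0.card := by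
          have hpos : 0 < B0.card := Finset.card_pos.mpr (hne B0 hB0)
          omega
        have hsing : ∀ B ∈ P, B ≠ B0 → B.card = 1 := by
          intro B hB hBne
          by_contra h
          have hpos : 0 < B.card := Finset.card_pos.mpr (hne B hB)
          exact hbig2 ⟨B, hB, B0, hB0, hBne, by omega, h1B0⟩
        obtain ⟨a0, ha0, b0, hb0, hab0⟩ := ex2 B0 h1B0
        by_cases hq4 : 4 ≤ P.card
        · -- at least 3 singleton parts, pigeonhole on the two colors
          have h3 : 3 ≤ (P.erase B0).card := by
            rw [Finset.card_erase_of_mem hB0]; omega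
          obtain ⟨B1, B2, B3, hB1e, hB2e, hB3e, h12, h13, h23⟩ := ex3 _ h3
          have hB1P := Finset.mem_of_mem_erase hB1e
          have hB2P := Finset.mem_of_mem_erase hB2e
          have hB3P := Finset.mem_of_mem_erase hB3e
          have hB1n := Finset.ne_of_mem_erase hB1e
          have hB2n := Finset.ne_of_mem_erase hB2e
          have hB3n := Finset.ne_of_mem_erase hB3e
          obtain ⟨γ1, hγ1αβ, hγ1⟩ := hmono B0 hB0 B1 hB1P (Ne.symm hB1n)
          obtain ⟨γ2, hγ2αβ, hγ2⟩ := hmono B0 hB0 B2 hB2P (Ne.symm hB2n)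
          obtain ⟨γ3, hγ3αβ, hγ3⟩ := hmono B0 hB0 B3 hB3P (Ne.symm hB3n)
          have mkp : ∀ (Bi Bj : Finset V), Bi ∈ P → Bj ∈ P → Bi ≠ B0 → Bj ≠ B0 → Bi ≠ Bj →
              ∀ γ, (∀ p ∈ B0, ∀ q ∈ Bi, c p q = γ) → (∀ p ∈ B0, ∀ q ∈ Bj, c p q = γ) →
              MonoC4 Full c := by
            intro Bi Bj hBi hBj hBin hBjn hBij γ hgi hgj
            obtain ⟨xi, hxieq⟩ := Finset.card_eq_one.mp (hsing Bi hBi hBin)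
            obtain ⟨xj, hxjeq⟩ := Finset.card_eq_one.mp (hsing Bj hBj hBjn)
            have hxi : xi ∈ Bi := by rw [hxieq]; exact Finset.mem_singleton_self xi
            have hxj : xj ∈ Bj := by rw [hxjeq]; exact Finset.mem_singleton_self xj
            have ha0xi : a0 ≠ xi := fun h => hdis B0 hB0 Bi hBi (Ne.symm hBin) a0 ha0 (h ▸ hxi)
            have ha0xj : a0 ≠ xj := fun h => hdis B0 hB0 Bj hBj (Ne.symm hBjn) a0 ha0 (h ▸ hxj)
            have hb0xi : b0 ≠ xi := fun h => hdis B0 hB0 Bi hBi (Ne.symm hBin) b0 hb0 (h ▸ hxi)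
            have hb0xj : b0 ≠ xj := fun h => hdis B0 hB0 Bj hBj (Ne.symm hBjn) b0 hb0 (h ▸ hxj)
            have hxixj : xi ≠ xj := fun h => hdis Bi hBi Bj hBj hBij xi hxi (h ▸ hxj)
            exact mk4 c γ a0 xi b0 xj ha0xi hab0 ha0xj (Ne.symm hb0xi) hxixj hb0xj
              (hgi a0 ha0 xi hxi) ((hs xi b0).trans (hgi b0 hb0 xi hxi))
              (hgj b0 hb0 xj hxj) ((hs xj a0).trans (hgj a0 ha0 xj hxj))
          rcases hγ1αβ with rfl | rfl <;> rcases hγ2αβ with rfl | rfl <;>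
            rcases hγ3αβ with rfl | rfl <;>
            first
              | exact mkp B1 B2 hB1P hB2P hB1n hB2n h12 _ hγ1 hγ2
              | exact mkp B1 B3 hB1P hB3P hB1n hB3n h13 _ hγ1 hγ3
              | exact mkp B2 B3 hB2P hB3P hB2n hB3n h23 _ hγ2 hγ3
        · -- P.card = 2 or 3
          have hq23 : P.card = 2 ∨ P.card = 3 := by omega
          rcases hq23 with hq2 | hq3
          · -- q = 2
            have h1 : (P.erase B0).card = 1 := by rw [Finset.card_erase_of_mem hB0]; omega
            obtain ⟨B1, hB1eq⟩ := Finset.card_eq_one.mp h1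
            have hB1e : B1 ∈ P.erase B0 := by rw [hB1eq]; exact Finset.mem_singleton_self B1
            have hB1P := Finset.mem_of_mem_erase hB1e
            have hB1n := Finset.ne_of_mem_erase hB1e
            obtain ⟨x, hxeq⟩ := Finset.card_eq_one.mp (hsing B1 hB1P hB1n)
            have hxB1 : x ∈ B1 := by rw [hxeq]; exact Finset.mem_singleton_self x
            have hxS : x ∈ S := hsub B1 hB1P hxB1
            have hxB0 : x ∉ B0 := fun h => hdis B1 hB1P B0 hB0 hB1n x hxB1 h
            have hSeq : S = B0 ∪ B1 := by
              apply Finset.Subset.antisymm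
              · intro z hz
                obtain ⟨B, hBP, hzB⟩ := hcov z hz
                by_cases hBB0 : B = B0
                · exact Finset.mem_union_left _ (hBB0 ▸ hzB)
                · have : B ∈ P.erase B0 := Finset.mem_erase.mpr ⟨hBB0, hBP⟩
                  rw [hB1eq, Finset.mem_singleton] at this
                  exact Finset.mem_union_right _ (this ▸ hzB)
              · exact Finset.union_subset (hsub B0 hB0) (hsub B1 hB1P)
            have hdisj01 : Disjoint B0 B1 :=
              Finset.disjoint_left.mpr (fun {z} hz0 hz1 => hdis B0 hB0 B1 hB1P (Ne.symm hB1n) z hz0 hz1)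
            have hScard : S.card = B0.card + 1 := by
              rw [hSeq, Finset.card_union_of_disjoint hdisj01, hxeq, Finset.card_singleton]
            obtain ⟨c1, hc1αβ, hc1⟩ := hmono B0 hB0 B1 hB1P (Ne.symm hB1n)
            have hstar1 : ∀ p ∈ B0, c p x = c1 := fun p hp => hc1 p hp x hxB1
            have hc1CS : c1 ∈ CS := by
              have := hclo a0 (hsub B0 hB0 ha0) x hxS
                (fun h => hdis B0 hB0 B1 hB1P (Ne.symm hB1n) a0 ha0 (h ▸ hxB1))
              rwa [hstar1 a0 ha0] at this
            rcases insideStar c hs hte CS S B0 (hsub B0 hB0) hclo c1 x hxS hxB0 hstar1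
              (by omega) with C | hno
            · exact C
            · refine IH (t-1) (by omega) (CS.erase c1) B0 ?_ ?_ ?_
              · rw [Finset.card_erase_of_mem hc1CS]; omega
              · intro p hp q hq hpq
                exact Finset.mem_erase.mpr ⟨hno p hp q hq hpq,
                  hclo p (hsub B0 hB0 hp) q (hsub B0 hB0 hq) hpq⟩
              · rw [Finset.card_erase_of_mem hc1CS]; omega
          · -- q = 3
            have h2 : (P.erase B0).card = 2 := by rw [Finset.card_erase_of_mem hB0]; omega
            obtain ⟨B1, B2, hB12, hB1B2eq⟩ := Finset.card_eq_two.mp h2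
            have hB1e : B1 ∈ P.erase B0 := by rw [hB1B2eq]; exact Finset.mem_insert_self _ _
            have hB2e : B2 ∈ P.erase B0 := by
              rw [hB1B2eq]; exact Finset.mem_insert_of_mem (Finset.mem_singleton_self B2)
            have hB1P := Finset.mem_of_mem_erase hB1e
            have hB2P := Finset.mem_of_mem_erase hB2e
            have hB1n := Finset.ne_of_mem_erase hB1e
            have hB2n := Finset.ne_of_mem_erase hB2e
            obtain ⟨x, hxeq⟩ := Finset.card_eq_one.mp (hsing B1 hB1P hB1n)
            obtain ⟨y, hyeq⟩ := Finset.card_eq_one.mp (hsing B2 hB2P hB2n)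
            have hxB1 : x ∈ B1 := by rw [hxeq]; exact Finset.mem_singleton_self x
            have hyB2 : y ∈ B2 := by rw [hyeq]; exact Finset.mem_singleton_self y
            have hxS : x ∈ S := hsub B1 hB1P hxB1
            have hyS : y ∈ S := hsub B2 hB2P hyB2
            have hxB0 : x ∉ B0 := fun h => hdis B1 hB1P B0 hB0 hB1n x hxB1 h
            have hyB0 : y ∉ B0 := fun h => hdis B2 hB2P B0 hB0 hB2n y hyB2 h
            have hxy : x ≠ y := fun h => hdis B1 hB1P B2 hB2P hB12 x hxB1 (h ▸ hyB2)
            have hSeq : S = B0 ∪ (B1 ∪ B2) := by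
              apply Finset.Subset.antisymm
              · intro z hz
                obtain ⟨B, hBP, hzB⟩ := hcov z hz
                by_cases hBB0 : B = B0
                · exact Finset.mem_union_left _ (hBB0 ▸ hzB)
                · have hBe : B ∈ P.erase B0 := Finset.mem_erase.mpr ⟨hBB0, hBP⟩
                  rw [hB1B2eq, Finset.mem_insert, Finset.mem_singleton] at hBe
                  rcases hBe with rfl | rfl
                  · exact Finset.mem_union_right _ (Finset.mem_union_left _ hzB)
                  · exact Finset.mem_union_right _ (Finset.mem_union_right _ hzB)
              · exact Finset.union_subset (hsub B0 hB0)
                  (Finset.union_subset (hsub B1 hB1P) (hsub B2 hB2P))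
            have hdisj01 : Disjoint B0 B1 :=
              Finset.disjoint_left.mpr (fun {z} hz0 hz1 => hdis B0 hB0 B1 hB1P (Ne.symm hB1n) z hz0 hz1)
            have hdisj02 : Disjoint B0 B2 :=
              Finset.disjoint_left.mpr (fun {z} hz0 hz1 => hdis B0 hB0 B2 hB2P (Ne.symm hB2n) z hz0 hz1)
            have hdisj12 : Disjoint B1 B2 :=
              Finset.disjoint_left.mpr (fun {z} hz0 hz1 => hdis B1 hB1P B2 hB2P hB12 z hz0 hz1)
            have hScard : S.card = B0.card + 2 := by
              rw [hSeq, Finset.card_union_of_disjoint (Finset.disjoint_union_right.mpr ⟨hdisj01, hdisj02⟩),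
                Finset.card_union_of_disjoint hdisj12, hxeq, hyeq]
              simp
            obtain ⟨c1, hc1αβ, hc1⟩ := hmono B0 hB0 B1 hB1P (Ne.symm hB1n)
            obtain ⟨c2, hc2αβ, hc2⟩ := hmono B0 hB0 B2 hB2P (Ne.symm hB2n)
            have hstar1 : ∀ p ∈ B0, c p x = c1 := fun p hp => hc1 p hp x hxB1
            have hstar2 : ∀ p ∈ B0, c p y = c2 := fun p hp => hc2 p hp y hyB2
            have ha0x : a0 ≠ x := fun h => hxB0 (h ▸ ha0)
            have hb0x : b0 ≠ x := fun h => hxB0 (h ▸ hb0)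
            have ha0y : a0 ≠ y := fun h => hyB0 (h ▸ ha0)
            have hb0y : b0 ≠ y := fun h => hyB0 (h ▸ hb0)
            have hc1CS : c1 ∈ CS := by
              have := hclo a0 (hsub B0 hB0 ha0) x hxS ha0x
              rwa [hstar1 a0 ha0] at this
            have hc2CS : c2 ∈ CS := by
              have := hclo a0 (hsub B0 hB0 ha0) y hyS ha0y
              rwa [hstar2 a0 ha0] at this
            by_cases hc12 : c1 = c2
            · exact mk4 c c1 a0 x b0 y ha0x hab0 ha0y (Ne.symm hb0x) hxy hb0y
                (hstar1 a0 ha0) ((hs x b0).trans (hstar1 b0 hb0))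
                (hc12 ▸ hstar2 b0 hb0) ((hs y a0).trans (hc12 ▸ hstar2 a0 ha0))
            · rcases insideStar c hs hte CS S B0 (hsub B0 hB0) hclo c1 x hxS hxB0 hstar1
                (by omega) with C | hno1
              · exact C
              · rcases insideStar c hs hte CS S B0 (hsub B0 hB0) hclo c2 y hyS hyB0 hstar2
                  (by omega) with C | hno2
                · exact C
                · refine IH (t-2) (by omega) ((CS.erase c1).erase c2) B0 ?_ ?_ ?_
                  · rw [Finset.card_erase_of_mem (Finset.mem_erase.mpr ⟨Ne.symm hc12, hc2CS⟩),
                      Finset.card_erase_of_mem hc1CS]; omega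
                  · intro p hp q hq hpq
                    exact Finset.mem_erase.mpr ⟨hno2 p hp q hq hpq,
                      Finset.mem_erase.mpr ⟨hno1 p hp q hq hpq,
                        hclo p (hsub B0 hB0 hp) q (hsub B0 hB0 hq) hpq⟩⟩
                  · rw [Finset.card_erase_of_mem (Finset.mem_erase.mpr ⟨Ne.symm hc12, hc2CS⟩),
                      Finset.card_erase_of_mem hc1CS]; omega
end MainInd2
section Lower

def pcond (a b : ℕ) : Prop := (a + 5 - b) % 5 = 1 ∨ (a + 5 - b) % 5 = 4

instance pcond_dec (a b : ℕ) : Decidable (pcond a b) := by unfold pcond; exact inferInstance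

lemma sym5 : ∀ u < 5, ∀ v < 5, (pcond u v ↔ pcond v u) := by decide

lemma noC45 : ∀ u1 u2 u3 u4 : Fin 5,
    ¬(u1 ≠ u2 ∧ u1 ≠ u3 ∧ u1 ≠ u4 ∧ u2 ≠ u3 ∧ u2 ≠ u4 ∧ u3 ≠ u4 ∧
      (pcond u1.val u2.val ↔ pcond u2.val u3.val) ∧
      (pcond u2.val u3.val ↔ pcond u3.val u4.val) ∧
      (pcond u3.val u4.val ↔ pcond u4.val u1.val)) := by decide

variable {k n : ℕ}

def colc (hk : 2 ≤ k) (a b : Fin n) : Fin k :=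
  if h : min a.val b.val + 2 < k ∧ a.val ≠ b.val then ⟨min a.val b.val + 2, h.1⟩
  else if pcond a.val b.val then ⟨0, by omega⟩ else ⟨1, by omega⟩

lemma pcond_shift (a b : ℕ) (hk : 2 ≤ k) (ha : k - 2 ≤ a) (hb : k - 2 ≤ b)
    (ha2 : a ≤ k + 2) (hb2 : b ≤ k + 2) :
    pcond a b ↔ pcond (a - (k-2)) (b - (k-2)) := by
  unfold pcond
  have h : a + 5 - b = (a - (k-2)) + 5 - (b - (k-2)) := by omega
  rw [h]

lemma colc_symm (hk : 2 ≤ k) (hn : n ≤ k + 3) (a b : Fin n) :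
    colc hk a b = colc hk b a := by
  unfold colc
  by_cases h : min a.val b.val + 2 < k ∧ a.val ≠ b.val
  · rw [dif_pos h, dif_pos (by rw [Nat.min_comm]; exact ⟨h.1, h.2.symm⟩)]
    exact Fin.ext (by simp [Nat.min_comm])
  · rw [dif_neg h, dif_neg (by rw [Nat.min_comm]; exact fun hh => h ⟨hh.1, hh.2.symm⟩)]
    by_cases hab : a.val = b.val
    · rw [hab]
    · have hmin : k - 2 ≤ min a.val b.val := by omega
      have hha : k - 2 ≤ a.val := le_trans hmin (Nat.min_le_left _ _)
      have hhb : k - 2 ≤ b.val := le_trans hmin (Nat.min_le_right _ _)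
      have ha2 : a.val ≤ k + 2 := by have := a.isLt; omega
      have hb2 : b.val ≤ k + 2 := by have := b.isLt; omega
      have hiff : pcond a.val b.val ↔ pcond b.val a.val := by
        rw [pcond_shift a.val b.val hk hha hhb ha2 hb2,
          pcond_shift b.val a.val hk hhb hha hb2 ha2]
        exact sym5 _ (by omega) _ (by omega)
      by_cases hp : pcond a.val b.val
      · rw [if_pos hp, if_pos (hiff.mp hp)]
      · rw [if_neg hp, if_neg (fun hq => hp (hiff.mpr hq))]

lemma colc_star (hk : 2 ≤ k) (a b : Fin n) (h : min a.val b.val + 2 < k)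
    (hab : a.val ≠ b.val) : (colc hk a b).val = min a.val b.val + 2 := by
  unfold colc; rw [dif_pos ⟨h, hab⟩]

lemma colc_pent (hk : 2 ≤ k) (a b : Fin n) (h : ¬(min a.val b.val + 2 < k ∧ a.val ≠ b.val)) :
    colc hk a b = if pcond a.val b.val then (⟨0, by omega⟩ : Fin k) else ⟨1, by omega⟩ := by
  unfold colc; rw [dif_neg h]

lemma colc_le1 (hk : 2 ≤ k) (a b : Fin n) (h : ¬(min a.val b.val + 2 < k ∧ a.val ≠ b.val)) :
    (colc hk a b).val ≤ 1 := by
  rw [colc_pent hk a b h]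
  by_cases hp : pcond a.val b.val
  · rw [if_pos hp]; exact Nat.zero_le 1
  · rw [if_neg hp]

lemma lower_no_rainbow (hk : 2 ≤ k) (hn : n ≤ k + 3) :
    ¬ RainbowTri Full (colc (n := n) hk) := by
  rintro ⟨a, b, d, hab, had, hbd, h1, h2, h3⟩
  have hvab : a.val ≠ b.val := fun h => hab (Fin.ext h)
  have hvad : a.val ≠ d.val := fun h => had (Fin.ext h)
  have hvbd : b.val ≠ d.val := fun h => hbd (Fin.ext h)
  -- case on the smallest
  by_cases hA : a.val < b.val ∧ a.val < d.val
  · by_cases hstar : a.val + 2 < k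
    · apply h1
      apply Fin.ext
      rw [colc_star hk a b (by rw [Nat.min_eq_left (le_of_lt hA.1)]; omega) hvab,
        colc_star hk a d (by rw [Nat.min_eq_left (le_of_lt hA.2)]; omega) hvad,
        Nat.min_eq_left (le_of_lt hA.1), Nat.min_eq_left (le_of_lt hA.2)]
    · -- all in pentagon zone
      have hge : k - 2 ≤ a.val := by omega
      have c1 := colc_le1 hk a b (by omega)
      have c2 := colc_le1 hk a d (by omega)
      have c3 := colc_le1 hk b d (by push_neg; intro hh; omega)
      -- three colors with val ≤ 1 : two equal
      have : (colc hk a b).val = (colc hk a d).val ∨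
          (colc hk a b).val = (colc hk b d).val ∨
          (colc hk a d).val = (colc hk b d).val := by omega
      rcases this with h | h | h
      · exact h1 (Fin.ext h)
      · exact h2 (Fin.ext h)
      · exact h3 (Fin.ext h)
  · by_cases hB : b.val < a.val ∧ b.val < d.val
    · by_cases hstar : b.val + 2 < k
      · apply h2
        apply Fin.ext
        rw [colc_star hk a b (by rw [Nat.min_eq_right (le_of_lt hB.1)]; omega) hvab,
          colc_star hk b d (by rw [Nat.min_eq_left (le_of_lt hB.2)]; omega) hvbd,
          Nat.min_eq_right (le_of_lt hB.1), Nat.min_eq_left (le_of_lt hB.2)]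
      · have c1 := colc_le1 hk a b (by push_neg; intro hh; omega)
        have c2 := colc_le1 hk a d (by push_neg; intro hh; omega)
        have c3 := colc_le1 hk b d (by push_neg; intro hh; omega)
        have : (colc hk a b).val = (colc hk a d).val ∨
            (colc hk a b).val = (colc hk b d).val ∨
            (colc hk a d).val = (colc hk b d).val := by omega
        rcases this with h | h | h
        · exact h1 (Fin.ext h)
        · exact h2 (Fin.ext h)
        · exact h3 (Fin.ext h)
    · have hD : d.val < a.val ∧ d.val < b.val := by omega
      by_cases hstar : d.val + 2 < k
      · apply h3
        apply Fin.ext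
        rw [colc_star hk a d (by rw [Nat.min_eq_right (le_of_lt hD.1)]; omega) hvad,
          colc_star hk b d (by rw [Nat.min_eq_right (le_of_lt hD.2)]; omega) hvbd,
          Nat.min_eq_right (le_of_lt hD.1), Nat.min_eq_right (le_of_lt hD.2)]
      · have c1 := colc_le1 hk a b (by push_neg; intro hh; omega)
        have c2 := colc_le1 hk a d (by push_neg; intro hh; omega)
        have c3 := colc_le1 hk b d (by push_neg; intro hh; omega)
        have : (colc hk a b).val = (colc hk a d).val ∨
            (colc hk a b).val = (colc hk b d).val ∨
            (colc hk a d).val = (colc hk b d).val := by omega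
        rcases this with h | h | h
        · exact h1 (Fin.ext h)
        · exact h2 (Fin.ext h)
        · exact h3 (Fin.ext h)


lemma pent_iff {k n : ℕ} (hk : 2 ≤ k) (p q r s : Fin n)
    (h1 : ¬(min p.val q.val + 2 < k ∧ p.val ≠ q.val))
    (h2 : ¬(min r.val s.val + 2 < k ∧ r.val ≠ s.val))
    (heq : colc hk p q = colc hk r s) : pcond p.val q.val ↔ pcond r.val s.val := by
  rw [colc_pent hk p q h1, colc_pent hk r s h2] at heq
  by_cases c1 : pcond p.val q.val <;> by_cases c2 : pcond r.val s.val <;>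
    simp [c1, c2, Fin.mk.injEq] at heq ⊢

lemma lower_no_C4 (hk : 2 ≤ k) (hn : n ≤ k + 3) :
    ¬ MonoC4 Full (colc (n := n) hk) := by
  rintro ⟨a, b, d, e, hab, had, hae, hbd, hbe, hde, -, -, -, -, e1, e2, e3⟩
  have hvab : a.val ≠ b.val := fun h => hab (Fin.ext h)
  have hvad : a.val ≠ d.val := fun h => had (Fin.ext h)
  have hvae : a.val ≠ e.val := fun h => hae (Fin.ext h)
  have hvbd : b.val ≠ d.val := fun h => hbd (Fin.ext h)
  have hvbe : b.val ≠ e.val := fun h => hbe (Fin.ext h)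
  have hvde : d.val ≠ e.val := fun h => hde (Fin.ext h)
  set γ := colc (n := n) hk a b with hγ
  have hcde : colc hk d e = γ := (e1.trans e2).symm
  have hcbd : colc hk b d = γ := e1.symm
  have hcea : colc hk e a = γ := (e1.trans (e2.trans e3)).symm
  by_cases hγ2 : 2 ≤ γ.val
  · -- star color: all cycle edges contain the center vertex
    have hmin1 : min a.val b.val = γ.val - 2 := by
      by_cases h : min a.val b.val + 2 < k ∧ a.val ≠ b.val
      · have := colc_star hk a b h.1 h.2
        rw [← hγ] at this; omega
      · have := colc_le1 hk a b h
        rw [← hγ] at this; omega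
    have hmin2 : min d.val e.val = γ.val - 2 := by
      by_cases h : min d.val e.val + 2 < k ∧ d.val ≠ e.val
      · have := colc_star hk d e h.1 h.2
        rw [hcde] at this; omega
      · have := colc_le1 hk d e h
        rw [hcde] at this; omega
    rcases Nat.le_total a.val b.val with h1 | h1 <;>
      rcases Nat.le_total d.val e.val with h2 | h2
    · rw [Nat.min_eq_left h1] at hmin1; rw [Nat.min_eq_left h2] at hmin2
      exact hvad (hmin1.trans hmin2.symm)
    · rw [Nat.min_eq_left h1] at hmin1; rw [Nat.min_eq_right h2] at hmin2
      exact hvae (hmin1.trans hmin2.symm)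
    · rw [Nat.min_eq_right h1] at hmin1; rw [Nat.min_eq_left h2] at hmin2
      exact hvbd (hmin1.trans hmin2.symm)
    · rw [Nat.min_eq_right h1] at hmin1; rw [Nat.min_eq_right h2] at hmin2
      exact hvbe (hmin1.trans hmin2.symm)
  · -- pentagon zone
    have hstep : ∀ (p q : Fin n), p.val ≠ q.val → colc (n := n) hk p q = γ →
        ¬(min p.val q.val + 2 < k ∧ p.val ≠ q.val) ∧ k - 2 ≤ p.val ∧ k - 2 ≤ q.val := by
      intro p q hpq hcol
      by_cases h : min p.val q.val + 2 < k ∧ p.val ≠ q.val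
      · have := colc_star hk p q h.1 h.2
        rw [hcol] at this; omega
      · refine ⟨h, ?_, ?_⟩ <;>
        · have hge : ¬(min p.val q.val + 2 < k) := fun hh => h ⟨hh, hpq⟩
          have h1 := Nat.min_le_left p.val q.val
          have h2 := Nat.min_le_right p.val q.val
          omega
    obtain ⟨hc1, hka, hkb⟩ := hstep a b hvab rfl
    obtain ⟨hc2, _, hkd⟩ := hstep b d hvbd hcbd
    obtain ⟨hc3, _, hke⟩ := hstep d e hvde hcde
    obtain ⟨hc4, _, _⟩ := hstep e a (Ne.symm hvae) hcea
    have hba : a.val ≤ k + 2 := by have := a.isLt; omega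
    have hbb : b.val ≤ k + 2 := by have := b.isLt; omega
    have hbd2 : d.val ≤ k + 2 := by have := d.isLt; omega
    have hbe2 : e.val ≤ k + 2 := by have := e.isLt; omega
    have i1 : pcond a.val b.val ↔ pcond b.val d.val :=
      pent_iff hk a b b d hc1 hc2 e1
    have i2 : pcond b.val d.val ↔ pcond d.val e.val :=
      pent_iff hk b d d e hc2 hc3 e2
    have i3 : pcond d.val e.val ↔ pcond e.val a.val :=
      pent_iff hk d e e a hc3 hc4 e3
    rw [pcond_shift a.val b.val hk hka hkb hba hbb,
      pcond_shift b.val d.val hk hkb hkd hbb hbd2] at i1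
    rw [pcond_shift b.val d.val hk hkb hkd hbb hbd2,
      pcond_shift d.val e.val hk hkd hke hbd2 hbe2] at i2
    rw [pcond_shift d.val e.val hk hkd hke hbd2 hbe2,
      pcond_shift e.val a.val hk hke hka hbe2 hba] at i3
    refine noC45 ⟨a.val - (k-2), by omega⟩ ⟨b.val - (k-2), by omega⟩
      ⟨d.val - (k-2), by omega⟩ ⟨e.val - (k-2), by omega⟩
      ⟨?_, ?_, ?_, ?_, ?_, ?_, ?_, ?_, ?_⟩
    · intro hh; apply hvab; have := congrArg Fin.val hh; simp only [] at this; omega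
    · intro hh; apply hvad; have := congrArg Fin.val hh; simp only [] at this; omega
    · intro hh; apply hvae; have := congrArg Fin.val hh; simp only [] at this; omega
    · intro hh; apply hvbd; have := congrArg Fin.val hh; simp only [] at this; omega
    · intro hh; apply hvbe; have := congrArg Fin.val hh; simp only [] at this; omega
    · intro hh; apply hvde; have := congrArg Fin.val hh; simp only [] at this; omega
    · exact i1
    · exact i2
    · exact i3

end Lower

theorem stmt6 (k : ℕ) (hk : 2 ≤ k) :
    IsLeast {n | ∀ c : Fin n → Fin n → Fin k, (∀ a b, c a b = c b a) →
      RainbowTri Full c ∨ MonoC4 Full c} (k + 4) := by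
  constructor
  · -- membership: every coloring of K_{k+4} works
    intro c hsymm
    by_cases hr : RainbowTri Full c
    · exact Or.inl hr
    · right
      have hte := two_eq c hr
      apply mainC4 c hsymm hte k (Finset.univ : Finset (Fin k))
        (Finset.univ : Finset (Fin (k+4)))
      · rw [Finset.card_univ, Fintype.card_fin]
      · intro x _ y _ _; exact Finset.mem_univ _
      · rw [Finset.card_univ, Fintype.card_fin, Finset.card_univ, Fintype.card_fin]
  · -- lower bound
    intro n hn
    by_contra hlt
    push_neg at hlt
    have hn3 : n ≤ k + 3 := by omega
    rcases hn (colc hk) (colc_symm hk hn3) with hr | hm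
    · exact lower_no_rainbow hk hn3 hr
    · exact lower_no_C4 hk hn3 hm
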